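/- (Simultaneous rank confidence intervals from the sequential-rejective algorithm.) In the setting of the sequential-rejective algorithm with Gaussian quantile critical values q(A), let R_final(ω) = R_{n(n−1)}(ω) (the recursion has stabilized after n(n−1) steps), and define L_i(ω) = 1 + #{j : (i,j) ∈ R_final(ω)} and U_i(ω) = n − #{j : (j,i) ∈ R_final(ω)}. Then P(for all i, L_i ≤ l_i and u_i ≤ U_i) ≥ 1 − α, i.e., the intervals [L_i, U_i] are simultaneous confidence intervals for the set-ranks at joint level 1 − α. -/

import Mathlib

open MeasureTheory ProbabilityTheory Filter

/-- Joint law of independent random variables is the product of the marginals. -/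
lemma joint_pi_aux {n : ℕ} {Ω : Type*} [MeasurableSpace Ω] (P : Measure Ω)
    (f : Fin n → Ω → ℝ) (hmeas : ∀ i, Measurable (f i))
    (hindep : iIndepFun f P)
    (ν : Fin n → Measure ℝ) [∀ i, IsProbabilityMeasure (ν i)]
    (hdist : ∀ i, P.map (f i) = ν i) :
    P.map (fun ω i => f i ω) = Measure.pi ν := by
  refine (Measure.pi_eq fun s hs => ?_).symm
  rw [Measure.map_apply (measurable_pi_lambda _ hmeas) (MeasurableSet.univ_pi hs)]
  have hset : (fun ω i => f i ω) ⁻¹' Set.pi Set.univ s = ⋂ i ∈ Finset.univ, f i ⁻¹' s i := by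
    ext ω; simp [Set.mem_univ_pi]
  rw [hset, hindep.measure_inter_preimage_eq_mul Finset.univ (fun i _ => hs i)]
  exact Finset.prod_congr rfl fun i _ => by
    rw [← hdist i, Measure.map_apply (hmeas i) (hs i)]

/-- Quantile facts for a monotone right-continuous family of events. -/
lemma quantile_aux {Ω' : Type*} [MeasurableSpace Ω'] (P' : Measure Ω') [IsProbabilityMeasure P']
    (a : ENNReal) (ha0 : 0 < a) (ha1 : a < 1)
    (E : ℝ → Set Ω') (hEmeas : ∀ x, MeasurableSet (E x)) (hEmono : Monotone E)
    (hcov : ∀ ω, ∃ x : ℝ, ω ∈ E x) (hesc : ∀ ω, ∃ x : ℝ, ω ∉ E x)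
    (hcont : ∀ x : ℝ, ⋂ m : ℕ, E (x + 1/(m+1)) = E x) :
    {x : ℝ | a ≤ P' (E x)}.Nonempty ∧ BddBelow {x : ℝ | a ≤ P' (E x)} ∧
      a ≤ P' (E (sInf {x : ℝ | a ≤ P' (E x)})) := by
  have hS : ∀ x x' : ℝ, x ≤ x' → a ≤ P' (E x) → a ≤ P' (E x') :=
    fun x x' h hx => hx.trans (measure_mono (hEmono h))
  have hne : ∃ m : ℕ, a ≤ P' (E m) := by
    have hmono : Monotone fun m : ℕ => E m := fun m m' h => hEmono (by exact_mod_cast h)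
    have hU : ⋃ m : ℕ, E (m : ℝ) = Set.univ := by
      ext ω
      simp only [Set.mem_iUnion, Set.mem_univ, iff_true]
      obtain ⟨x, hx⟩ := hcov ω
      obtain ⟨m, hm⟩ := exists_nat_ge x
      exact ⟨m, hEmono hm hx⟩
    have ht := tendsto_measure_iUnion_atTop (μ := P') hmono
    rw [hU, measure_univ] at ht
    exact (ht.eventually_const_le ha1).exists
  have hbdd : ∃ m : ℕ, P' (E (-(m : ℝ))) < a := by
    have hanti : Antitone fun m : ℕ => E (-(m : ℝ)) :=
      fun m m' h => hEmono (neg_le_neg (by exact_mod_cast h))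
    have hI : ⋂ m : ℕ, E (-(m : ℝ)) = ∅ := by
      ext ω
      simp only [Set.mem_iInter, Set.mem_empty_iff_false, iff_false, not_forall]
      obtain ⟨x, hx⟩ := hesc ω
      obtain ⟨m, hm⟩ := exists_nat_gt (-x)
      exact ⟨m, fun hmem => hx (hEmono (by linarith) hmem)⟩
    have ht := tendsto_measure_iInter_atTop (μ := P')
      (fun m => (hEmeas _).nullMeasurableSet) hanti ⟨0, measure_ne_top _ _⟩
    rw [hI, measure_empty] at ht
    exact (ht.eventually_lt_const ha0).exists
  obtain ⟨m₁, hm₁⟩ := hne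
  obtain ⟨m₂, hm₂⟩ := hbdd
  have hSne : {x : ℝ | a ≤ P' (E x)}.Nonempty := ⟨m₁, hm₁⟩
  have hSbdd : BddBelow {x : ℝ | a ≤ P' (E x)} := by
    refine ⟨-(m₂ : ℝ), fun x hx => ?_⟩
    by_contra h
    push_neg at h
    exact absurd (hS x _ h.le hx) (not_le.mpr hm₂)
  refine ⟨hSne, hSbdd, ?_⟩
  set c := sInf {x : ℝ | a ≤ P' (E x)} with hc
  have hanti : Antitone fun m : ℕ => E (c + 1/(m+1)) := by
    intro m m' h
    apply hEmono
    have h1 : (0:ℝ) < (m:ℝ) + 1 := by positivity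
    have h2 : (m:ℝ) + 1 ≤ (m':ℝ) + 1 := by
      have : (m:ℝ) ≤ m' := by exact_mod_cast h
      linarith
    have := one_div_le_one_div_of_le h1 h2
    linarith
  have hmem : ∀ m : ℕ, a ≤ P' (E (c + 1/(m+1))) := by
    intro m
    obtain ⟨x, hx, hlt⟩ := Real.lt_sInf_add_pos hSne (show (0:ℝ) < 1/(m+1) by positivity)
    exact hS x _ hlt.le hx
  have ht := tendsto_measure_iInter_atTop (μ := P')
    (fun m => (hEmeas _).nullMeasurableSet) hanti ⟨0, measure_ne_top _ _⟩
  rw [hcont c] at ht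
  exact ge_of_tendsto' ht hmem

/-- Auxiliary event family: all standardized differences over `B` are at most `x`. -/
def EEaux {n : ℕ} {Ω' : Type*} (Yt : Fin n → Ω' → ℝ) (σ : Fin n → ℝ)
    (B : Set (Fin n × Fin n)) (x : ℝ) : Set Ω' :=
  ⋂ p ∈ B, {ω | (Yt p.1 ω - Yt p.2 ω) / Real.sqrt ((σ p.1) ^ 2 + (σ p.2) ^ 2) ≤ x}

lemma mem_EEaux {n : ℕ} {Ω' : Type*} {Yt : Fin n → Ω' → ℝ} {σ : Fin n → ℝ}
    {B : Set (Fin n × Fin n)} {x : ℝ} {ω : Ω'} :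
    ω ∈ EEaux Yt σ B x ↔ ∀ p ∈ B,
      (Yt p.1 ω - Yt p.2 ω) / Real.sqrt ((σ p.1) ^ 2 + (σ p.2) ^ 2) ≤ x := by
  simp [EEaux]

theorem stmt_7 {n : ℕ} {Ω Ω' : Type*} [MeasurableSpace Ω] [MeasurableSpace Ω']
    (P : Measure Ω) [IsProbabilityMeasure P] (P' : Measure Ω') [IsProbabilityMeasure P']
    (μ σ : Fin n → ℝ) (hσ : ∀ i, 0 < σ i)
    (y : Fin n → Ω → ℝ) (hymeas : ∀ i, Measurable (y i))
    (hyindep : iIndepFun y P)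
    (hydist : ∀ i, P.map (y i) = gaussianReal (μ i) ⟨(σ i) ^ 2, sq_nonneg _⟩)
    (Yt : Fin n → Ω' → ℝ) (hYmeas : ∀ i, Measurable (Yt i))
    (hYindep : iIndepFun Yt P')
    (hYdist : ∀ i, P'.map (Yt i) = gaussianReal 0 ⟨(σ i) ^ 2, sq_nonneg _⟩)
    (α : ℝ) (hα : α ∈ Set.Ioo (0 : ℝ) 1)
    (q : Set (Fin n × Fin n) → ℝ)
    (hq : ∀ A : Set (Fin n × Fin n), ({p : Fin n × Fin n | p.1 ≠ p.2} \ A).Nonempty →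
      q A = sInf {x : ℝ | ENNReal.ofReal (1 - α) ≤
        P' {ω | sSup ((fun p : Fin n × Fin n =>
            (Yt p.1 ω - Yt p.2 ω) / Real.sqrt ((σ p.1) ^ 2 + (σ p.2) ^ 2)) ''
            ({p : Fin n × Fin n | p.1 ≠ p.2} \ A)) ≤ x}})
    (R : ℕ → Ω → Set (Fin n × Fin n))
    (hR0 : ∀ ω, R 0 ω = ∅)
    (hRs : ∀ k ω, R (k + 1) ω = R k ω ∪ {p : Fin n × Fin n | p.1 ≠ p.2 ∧
      q (R k ω) < (y p.1 ω - y p.2 ω) / Real.sqrt ((σ p.1) ^ 2 + (σ p.2) ^ 2)}) :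
    ENNReal.ofReal (1 - α) ≤
      P {ω | ∀ i : Fin n,
        1 + {j : Fin n | (i, j) ∈ R (n * (n - 1)) ω}.ncard
            ≤ 1 + {j : Fin n | j ≠ i ∧ μ j < μ i}.ncard ∧
        n - {j : Fin n | j ≠ i ∧ μ i ≤ μ j}.ncard
            ≤ n - {j : Fin n | (j, i) ∈ R (n * (n - 1)) ω}.ncard} := by
  obtain ⟨hα0, hα1⟩ := hα
  set a : ENNReal := ENNReal.ofReal (1 - α) with ha
  set H : Set (Fin n × Fin n) := {p | p.1 ≠ p.2} with hH
  set N : Set (Fin n × Fin n) := {p | p.1 ≠ p.2 ∧ μ p.1 ≤ μ p.2} with hNdef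
  by_cases hN : N.Nonempty
  swap
  · -- degenerate case: no pair with μ p.1 ≤ μ p.2, hence no pair at all
    have hHe : H = ∅ := by
      rw [Set.eq_empty_iff_forall_notMem]
      intro p hp
      rcases le_total (μ p.1) (μ p.2) with h | h
      · exact hN ⟨p, hp, h⟩
      · exact hN ⟨(p.2, p.1), Ne.symm hp, h⟩
    have hRe : ∀ k ω, R k ω = ∅ := by
      intro k
      induction k with
      | zero => exact hR0
      | succ k ih =>
        intro ω
        rw [hRs k ω, ih ω, Set.empty_union, Set.eq_empty_iff_forall_notMem]
        intro p hp
        exact (Set.eq_empty_iff_forall_notMem.mp hHe) p hp.1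
    have : {ω | ∀ i : Fin n,
        1 + {j : Fin n | (i, j) ∈ R (n * (n - 1)) ω}.ncard
            ≤ 1 + {j : Fin n | j ≠ i ∧ μ j < μ i}.ncard ∧
        n - {j : Fin n | j ≠ i ∧ μ i ≤ μ j}.ncard
            ≤ n - {j : Fin n | (j, i) ∈ R (n * (n - 1)) ω}.ncard} = Set.univ := by
      ext ω
      simp only [Set.mem_setOf_eq, Set.mem_univ, iff_true]
      intro i
      have h1 : {j : Fin n | (i, j) ∈ R (n * (n - 1)) ω} = ∅ := by
        ext j; simp [hRe]
      have h2 : {j : Fin n | (j, i) ∈ R (n * (n - 1)) ω} = ∅ := by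
        ext j; simp [hRe]
      rw [h1, h2, Set.ncard_empty]
      exact ⟨by simp, by simp [Nat.sub_le]⟩
    rw [this, measure_univ, ha]
    exact ENNReal.ofReal_le_one.mpr (by linarith)
  -- main case
  have ha0 : 0 < a := ENNReal.ofReal_pos.mpr (by linarith)
  have ha1 : a < 1 := by rw [ha]; exact ENNReal.ofReal_lt_one.mpr (by linarith)
  set T : Set (Fin n × Fin n) := {p | p.1 ≠ p.2 ∧ μ p.2 < μ p.1} with hTdef
  have hHT : H \ T = N := by
    ext p
    constructor
    · rintro ⟨h1, h2⟩
      exact ⟨h1, le_of_not_gt fun hlt => h2 ⟨h1, hlt⟩⟩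
    · rintro ⟨h1, h2⟩
      exact ⟨h1, fun h => absurd h.2 (not_lt.mpr h2)⟩
  have hsqrt : ∀ p : Fin n × Fin n, 0 < Real.sqrt ((σ p.1) ^ 2 + (σ p.2) ^ 2) := by
    intro p
    apply Real.sqrt_pos.mpr
    have := hσ p.1
    have := hσ p.2
    positivity
  -- facts about the event family
  have hEmeas : ∀ (B : Set (Fin n × Fin n)) (x : ℝ), MeasurableSet (EEaux Yt σ B x) := by
    intro B x
    exact MeasurableSet.biInter (Set.to_countable B) fun p _ =>
      measurableSet_le (((hYmeas p.1).sub (hYmeas p.2)).div_const _) measurable_const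
  have hEmono : ∀ B : Set (Fin n × Fin n), Monotone (EEaux Yt σ B) := by
    intro B x x' hxx'
    intro ω hω
    exact mem_EEaux.mpr fun p hp => (mem_EEaux.mp hω p hp).trans hxx'
  have hEanti : ∀ (B B' : Set (Fin n × Fin n)) (x : ℝ), B ⊆ B' →
      EEaux Yt σ B' x ⊆ EEaux Yt σ B x := by
    intro B B' x hBB ω hω
    exact mem_EEaux.mpr fun p hp => mem_EEaux.mp hω p (hBB hp)
  have hcov : ∀ (B : Set (Fin n × Fin n)) (ω : Ω'), ∃ x : ℝ, ω ∈ EEaux Yt σ B x := by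
    intro B ω
    refine ⟨sSup ((fun p : Fin n × Fin n =>
      (Yt p.1 ω - Yt p.2 ω) / Real.sqrt ((σ p.1) ^ 2 + (σ p.2) ^ 2)) '' B), ?_⟩
    exact mem_EEaux.mpr fun p hp =>
      le_csSup (Set.Finite.bddAbove (Set.toFinite _)) ⟨p, hp, rfl⟩
  have hesc : ∀ B : Set (Fin n × Fin n), B.Nonempty → ∀ ω : Ω',
      ∃ x : ℝ, ω ∉ EEaux Yt σ B x := by
    rintro B ⟨p₀, hp₀⟩ ω
    refine ⟨(Yt p₀.1 ω - Yt p₀.2 ω) / Real.sqrt ((σ p₀.1) ^ 2 + (σ p₀.2) ^ 2) - 1, fun hmem => ?_⟩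
    have := mem_EEaux.mp hmem p₀ hp₀
    linarith
  have hcont : ∀ (B : Set (Fin n × Fin n)) (x : ℝ),
      ⋂ m : ℕ, EEaux Yt σ B (x + 1/(m+1)) = EEaux Yt σ B x := by
    intro B x
    apply Set.Subset.antisymm
    · intro ω hω
      refine mem_EEaux.mpr fun p hp => ?_
      by_contra hlt
      push_neg at hlt
      obtain ⟨m, hm⟩ := exists_nat_one_div_lt (show (0:ℝ) <
        (Yt p.1 ω - Yt p.2 ω) / Real.sqrt ((σ p.1) ^ 2 + (σ p.2) ^ 2) - x by linarith)
      have := mem_EEaux.mp (Set.mem_iInter.mp hω m) p hp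
      linarith
    · intro ω hω
      exact Set.mem_iInter.mpr fun m =>
        hEmono B (le_add_of_nonneg_right (by positivity)) hω
  have qf : ∀ B : Set (Fin n × Fin n), B.Nonempty →
      {x : ℝ | a ≤ P' (EEaux Yt σ B x)}.Nonempty ∧
      BddBelow {x : ℝ | a ≤ P' (EEaux Yt σ B x)} ∧
      a ≤ P' (EEaux Yt σ B (sInf {x : ℝ | a ≤ P' (EEaux Yt σ B x)})) :=
    fun B hB => quantile_aux P' a ha0 ha1 (EEaux Yt σ B) (hEmeas B) (hEmono B)
      (hcov B) (hesc B hB) (hcont B)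
  -- rewrite the quantile definition
  have hsSupEq : ∀ B : Set (Fin n × Fin n), B.Nonempty → ∀ x : ℝ,
      {ω | sSup ((fun p : Fin n × Fin n =>
        (Yt p.1 ω - Yt p.2 ω) / Real.sqrt ((σ p.1) ^ 2 + (σ p.2) ^ 2)) '' B) ≤ x}
      = EEaux Yt σ B x := by
    intro B hB x
    ext ω
    rw [Set.mem_setOf_eq, csSup_le_iff (Set.Finite.bddAbove (Set.toFinite _)) (hB.image _),
      mem_EEaux]
    exact Set.forall_mem_image
  have hq2 : ∀ A : Set (Fin n × Fin n), (H \ A).Nonempty →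
      q A = sInf {x : ℝ | a ≤ P' (EEaux Yt σ (H \ A) x)} := by
    intro A hA
    rw [hq A hA]
    exact congrArg sInf (Set.ext fun x => by
      simp only [Set.mem_setOf_eq]
      rw [hsSupEq _ hA x])
  have hHTne : (H \ T).Nonempty := by rw [hHT]; exact hN
  have hqT : q T = sInf {x : ℝ | a ≤ P' (EEaux Yt σ N x)} := by
    rw [hq2 T hHTne, hHT]
  -- monotonicity of quantiles
  have hqmono : ∀ A : Set (Fin n × Fin n), A ⊆ T → q T ≤ q A := by
    intro A hAT
    have hNA : N ⊆ H \ A := by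
      intro p hp
      rw [← hHT] at hp
      exact ⟨hp.1, fun hpA => hp.2 (hAT hpA)⟩
    have hHA : (H \ A).Nonempty := hN.mono hNA
    rw [hq2 A hHA, hqT]
    refine csInf_le_csInf (qf N hN).2.1 (qf _ hHA).1 ?_
    intro x hx
    exact hx.trans (measure_mono (hEanti N (H \ A) x hNA))
  -- distributional transfer
  set ν : Fin n → Measure ℝ := fun i => gaussianReal 0 ⟨(σ i) ^ 2, sq_nonneg _⟩ with hν
  have hg : ∀ i : Fin n, (fun ω => y i ω - μ i) = (fun x : ℝ => x + -(μ i)) ∘ y i := by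
    intro i; funext ω; simp [sub_eq_add_neg]
  have hgmeas : ∀ i, Measurable fun ω => y i ω - μ i :=
    fun i => (hymeas i).sub measurable_const
  have hgindep : iIndepFun (fun i ω => y i ω - μ i) P := by
    have := hyindep.comp (fun i => fun x : ℝ => x + -(μ i))
      (fun i => measurable_add_const _)
    have heq : (fun i => (fun x : ℝ => x + -(μ i)) ∘ y i) = fun i ω => y i ω - μ i := by
      funext i ω; simp [sub_eq_add_neg]
    rwa [heq] at this
  have hgdist : ∀ i, P.map (fun ω => y i ω - μ i) = ν i := by
    intro i
    rw [hg i, ← Measure.map_map (measurable_add_const _) (hymeas i), hydist i]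
    exact (gaussianReal_map_add_const (μ := μ i) (v := ⟨σ i ^ 2, sq_nonneg _⟩) (-(μ i))).trans
      (by simp [hν])
  haveI : ∀ i, IsProbabilityMeasure (ν i) := fun i => instIsProbabilityMeasureGaussianReal 0 ⟨σ i ^ 2, sq_nonneg _⟩
  have h1 : P.map (fun ω i => y i ω - μ i) = Measure.pi ν :=
    joint_pi_aux P _ hgmeas hgindep ν hgdist
  have h2 : P'.map (fun ω i => Yt i ω) = Measure.pi ν :=
    joint_pi_aux P' Yt hYmeas hYindep ν hYdist
  set c : ℝ := q T with hc
  set SetG : Set (Fin n → ℝ) :=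
    ⋂ p ∈ N, {v : Fin n → ℝ |
      (v p.1 - v p.2) / Real.sqrt ((σ p.1) ^ 2 + (σ p.2) ^ 2) ≤ c} with hSetG
  have hSetGmeas : MeasurableSet SetG := by
    rw [hSetG]
    exact MeasurableSet.biInter (Set.to_countable N) fun p _ =>
      measurableSet_le (((measurable_pi_apply p.1).sub (measurable_pi_apply p.2)).div_const _)
        measurable_const
  set G' : Set Ω := {ω | ∀ p ∈ N,
    ((y p.1 ω - μ p.1) - (y p.2 ω - μ p.2)) / Real.sqrt ((σ p.1) ^ 2 + (σ p.2) ^ 2) ≤ c}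
    with hG'
  have hG'pre : G' = (fun ω i => y i ω - μ i) ⁻¹' SetG := by
    ext ω
    simp only [hG', hSetG, Set.mem_setOf_eq, Set.mem_preimage, Set.mem_iInter]
  have hEEpre : EEaux Yt σ N c = (fun ω i => Yt i ω) ⁻¹' SetG := by
    ext ω
    simp only [EEaux, hSetG, Set.mem_setOf_eq, Set.mem_preimage, Set.mem_iInter]
  have hPG' : a ≤ P G' := by
    have step1 : a ≤ P' (EEaux Yt σ N c) := by
      rw [hqT]
      exact (qf N hN).2.2
    have step2 : P' (EEaux Yt σ N c) = P G' := by
      rw [hEEpre, hG'pre,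
        ← Measure.map_apply (measurable_pi_lambda _ fun i => hYmeas i) hSetGmeas,
        ← Measure.map_apply (measurable_pi_lambda _ hgmeas) hSetGmeas, h1, h2]
    rwa [step2] at step1
  refine hPG'.trans (measure_mono ?_)
  -- G' implies the confidence statement
  intro ω hω
  have hZy : ∀ p ∈ N,
      (y p.1 ω - y p.2 ω) / Real.sqrt ((σ p.1) ^ 2 + (σ p.2) ^ 2) ≤ c := by
    intro p hp
    refine le_trans ?_ (hω p hp)
    apply (div_le_div_iff_of_pos_right (hsqrt p)).mpr
    have := hp.2
    linarith
  have hRT : ∀ k, R k ω ⊆ T := by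
    intro k
    induction k with
    | zero => rw [hR0]; exact Set.empty_subset _
    | succ k ih =>
      rw [hRs k ω]
      rintro p (hp | ⟨hp1, hp2⟩)
      · exact ih hp
      · by_contra hpT
        have hpN : p ∈ N := ⟨hp1, le_of_not_gt fun hlt => hpT ⟨hp1, hlt⟩⟩
        exact absurd (hZy p hpN) (not_le.mpr (lt_of_le_of_lt (hqmono (R k ω) ih) hp2))
  simp only [Set.mem_setOf_eq]
  intro i
  have hsub1 : {j : Fin n | (i, j) ∈ R (n * (n - 1)) ω} ⊆ {j : Fin n | j ≠ i ∧ μ j < μ i} := by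
    intro j hj
    have h := hRT _ hj
    exact ⟨Ne.symm h.1, h.2⟩
  have hsub2 : {j : Fin n | (j, i) ∈ R (n * (n - 1)) ω} ⊆ {j : Fin n | j ≠ i ∧ μ i ≤ μ j} := by
    intro j hj
    have h := hRT _ hj
    exact ⟨h.1, h.2.le⟩
  exact ⟨Nat.add_le_add_left (Set.ncard_le_ncard hsub1 (Set.toFinite _)) 1,
    Nat.sub_le_sub_left (Set.ncard_le_ncard hsub2 (Set.toFinite _)) n⟩
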